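/- Let K be a field and let g and h be Lie algebras over K. Suppose the vector space direct sum g ⊕ h carries a Lie algebra bracket ⁅·,·⁆ over K such that g ⊕ 0 and 0 ⊕ h are Lie subalgebras with the given brackets, i.e. ⁅X1 ⊕ 0, X2 ⊕ 0⁆ = ⁅X1,X2⁆ ⊕ 0 and ⁅0 ⊕ Y1, 0 ⊕ Y2⁆ = 0 ⊕ ⁅Y1,Y2⁆. Define σ_Y(X) ∈ g and ρ_X(Y) ∈ h by ⁅X ⊕ 0, 0 ⊕ Y⁆ = (−σ_Y(X)) ⊕ ρ_X(Y). Then ρ: g → gl(h) and σ: h → gl(g) are representations, and the matched pair equations hold for (g, h, ρ, σ). -/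

import Mathlib

/-- A `K`-bilinear, alternating bracket on the `K`-vector space `V` satisfying the
Jacobi identity, i.e. a Lie algebra structure on `V` over `K`. -/
structure IsLieBracket (K V : Type*) [Field K] [AddCommGroup V] [Module K V]
    (br : V → V → V) : Prop where
  add_left : ∀ x y z, br (x + y) z = br x z + br y z
  smul_left : ∀ (k : K) (x z : V), br (k • x) z = k • br x z
  add_right : ∀ x y z, br x (y + z) = br x y + br x z
  smul_right : ∀ (k : K) (x z : V), br x (k • z) = k • br x z
  alternate : ∀ x, br x x = 0
  jacobi : ∀ x y z, br (br x y) z + br (br y z) x + br (br z x) y = 0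

/-- A representation of the `K`-vector space `A`, equipped with the bracket `brA`,
on the `K`-vector space `V`: an assignment `a ↦ ρ_a` of `K`-linear endomorphisms of `V`,
`K`-linear in `a`, taking `brA` to the commutator bracket. -/
structure IsRep (K A V : Type*) [Field K] [AddCommGroup A] [Module K A]
    [AddCommGroup V] [Module K V] (brA : A → A → A) (ρ : A → V → V) : Prop where
  add_arg : ∀ (a : A) (v w : V), ρ a (v + w) = ρ a v + ρ a w
  smul_arg : ∀ (k : K) (a : A) (v : V), ρ a (k • v) = k • ρ a v
  add_act : ∀ (a b : A) (v : V), ρ (a + b) v = ρ a v + ρ b v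
  smul_act : ∀ (k : K) (a : A) (v : V), ρ (k • a) v = k • ρ a v
  bracket_act : ∀ (a b : A) (v : V), ρ (brA a b) v = ρ a (ρ b v) - ρ b (ρ a v)

/-- **Lie algebra structures on a direct sum with both summands as subalgebras give
matched pairs.** Let `g` and `h` be Lie algebras over a field `K` and suppose `g ⊕ h`
carries a Lie algebra bracket `br` over `K` such that `g ⊕ 0` and `0 ⊕ h` are Lie
subalgebras with the given brackets. Defining `σ_Y X ∈ g` and `ρ_X Y ∈ h` by
`⁅X ⊕ 0, 0 ⊕ Y⁆ = (−σ_Y X) ⊕ ρ_X Y`, the maps `ρ : g → gl(h)` and `σ : h → gl(g)`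
are representations, and the matched pair equations hold for `(g, h, ρ, σ)`. -/
theorem lieAlgebra_on_sum_to_matchedPair
    (K g h : Type*) [Field K]
    [LieRing g] [LieAlgebra K g] [LieRing h] [LieAlgebra K h]
    (br : g × h → g × h → g × h)
    (hbr : IsLieBracket K (g × h) br)
    (hsubg : ∀ X₁ X₂ : g, br (X₁, 0) (X₂, 0) = (⁅X₁, X₂⁆, 0))
    (hsubh : ∀ Y₁ Y₂ : h, br (0, Y₁) (0, Y₂) = (0, ⁅Y₁, Y₂⁆))
    (ρ : g → h → h) (σ : h → g → g)
    (hdef : ∀ (X : g) (Y : h), br (X, 0) (0, Y) = (-(σ Y X), ρ X Y)) :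
    IsRep K g h (fun X₁ X₂ => ⁅X₁, X₂⁆) ρ
    ∧ IsRep K h g (fun Y₁ Y₂ => ⁅Y₁, Y₂⁆) σ
    ∧ (∀ (X : g) (Y₁ Y₂ : h), ρ X ⁅Y₁, Y₂⁆ =
        ⁅ρ X Y₁, Y₂⁆ + ⁅Y₁, ρ X Y₂⁆ + ρ (σ Y₂ X) Y₁ - ρ (σ Y₁ X) Y₂)
    ∧ (∀ (Y : h) (X₁ X₂ : g), σ Y ⁅X₁, X₂⁆ =
        ⁅σ Y X₁, X₂⁆ + ⁅X₁, σ Y X₂⁆ + σ (ρ X₂ Y) X₁ - σ (ρ X₁ Y) X₂) := by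
  -- zero lemmas for br
  have hz_right : ∀ z : g × h, br z 0 = 0 := fun z => by
    simpa using hbr.smul_right 0 z 0
  have hz_left : ∀ z : g × h, br 0 z = 0 := fun z => by
    simpa using hbr.smul_left 0 0 z
  -- antisymmetry
  have hskew : ∀ x y : g × h, br y x = -br x y := by
    intro x y
    have h0 := hbr.alternate (x + y)
    rw [hbr.add_left, hbr.add_right, hbr.add_right, hbr.alternate, hbr.alternate] at h0
    have h1 : br x y + br y x = 0 := by simpa using h0
    exact eq_neg_of_add_eq_zero_right h1
  -- zero lemmas for ρ, σ
  have e0r : ∀ X : g, (-(σ 0 X), ρ X (0:h)) = ((0:g), (0:h)) := by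
    intro X
    rw [← hdef]
    exact hz_right (X, 0)
  have hρz : ∀ X : g, ρ X (0:h) = 0 := fun X => by
    simpa using congrArg Prod.snd (e0r X)
  have hσz : ∀ X : g, σ (0:h) X = 0 := fun X => by
    have := congrArg Prod.fst (e0r X)
    simpa using this
  have e0l : ∀ Y : h, (-(σ Y (0:g)), ρ (0:g) Y) = ((0:g), (0:h)) := by
    intro Y
    rw [← hdef]
    exact hz_left (0, Y)
  have hρz' : ∀ Y : h, ρ (0:g) Y = 0 := fun Y => by
    simpa using congrArg Prod.snd (e0l Y)
  have hσz' : ∀ Y : h, σ Y (0:g) = 0 := fun Y => by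
    have := congrArg Prod.fst (e0l Y)
    simpa using this
  -- additivity in the argument (h side)
  have eaddv : ∀ (a : g) (v w : h),
      (-(σ (v + w) a), ρ a (v + w)) = (-(σ v a), ρ a v) + (-(σ w a), ρ a w) := by
    intro a v w
    rw [← hdef, ← hdef, ← hdef, ← hbr.add_right]
    congr 1
    simp
  have hρ_addv : ∀ (a : g) (v w : h), ρ a (v + w) = ρ a v + ρ a w := by
    intro a v w
    simpa using congrArg Prod.snd (eaddv a v w)
  have hσ_addY : ∀ (a : g) (v w : h), σ (v + w) a = σ v a + σ w a := by
    intro a v w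
    have := congrArg Prod.fst (eaddv a v w)
    simp only [Prod.fst_add] at this
    rw [← neg_add] at this
    exact neg_inj.mp this
  -- smul in the argument (h side)
  have esmulv : ∀ (k : K) (a : g) (v : h),
      (-(σ (k • v) a), ρ a (k • v)) = k • (-(σ v a), ρ a v) := by
    intro k a v
    rw [← hdef, ← hdef, ← hbr.smul_right]
    congr 1
    simp
  have hρ_smulv : ∀ (k : K) (a : g) (v : h), ρ a (k • v) = k • ρ a v := by
    intro k a v
    simpa using congrArg Prod.snd (esmulv k a v)
  have hσ_smulY : ∀ (k : K) (a : g) (v : h), σ (k • v) a = k • σ v a := by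
    intro k a v
    have := congrArg Prod.fst (esmulv k a v)
    simp only [Prod.smul_fst] at this
    simpa [smul_neg] using this
  -- additivity in the actor (g side)
  have eadda : ∀ (a b : g) (v : h),
      (-(σ v (a + b)), ρ (a + b) v) = (-(σ v a), ρ a v) + (-(σ v b), ρ b v) := by
    intro a b v
    rw [← hdef, ← hdef, ← hdef, ← hbr.add_left]
    congr 1
    simp
  have hρ_adda : ∀ (a b : g) (v : h), ρ (a + b) v = ρ a v + ρ b v := by
    intro a b v
    simpa using congrArg Prod.snd (eadda a b v)
  have hσ_addX : ∀ (a b : g) (v : h), σ v (a + b) = σ v a + σ v b := by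
    intro a b v
    have := congrArg Prod.fst (eadda a b v)
    simp only [Prod.fst_add] at this
    rw [← neg_add] at this
    exact neg_inj.mp this
  -- smul in the actor (g side)
  have esmula : ∀ (k : K) (a : g) (v : h),
      (-(σ v (k • a)), ρ (k • a) v) = k • (-(σ v a), ρ a v) := by
    intro k a v
    rw [← hdef, ← hdef, ← hbr.smul_left]
    congr 1
    simp
  have hρ_smula : ∀ (k : K) (a : g) (v : h), ρ (k • a) v = k • ρ a v := by
    intro k a v
    simpa using congrArg Prod.snd (esmula k a v)
  have hσ_smulX : ∀ (k : K) (a : g) (v : h), σ v (k • a) = k • σ v a := by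
    intro k a v
    have := congrArg Prod.fst (esmula k a v)
    simp only [Prod.smul_fst] at this
    simpa [smul_neg] using this
  -- negation lemmas
  have hρ_negv : ∀ (a : g) (v : h), ρ a (-v) = -ρ a v := fun a v => by
    simpa using hρ_smulv (-1) a v
  have hρ_nega : ∀ (a : g) (v : h), ρ (-a) v = -ρ a v := fun a v => by
    simpa using hρ_smula (-1) a v
  have hσ_negY : ∀ (a : g) (v : h), σ (-v) a = -σ v a := fun a v => by
    simpa using hσ_smulY (-1) a v
  have hσ_negX : ∀ (a : g) (v : h), σ v (-a) = -σ v a := fun a v => by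
    simpa using hσ_smulX (-1) a v
  -- master formula
  have master : ∀ (X X' : g) (Y Y' : h), br (X, Y) (X', Y') =
      (⁅X, X'⁆ - σ Y' X + σ Y X', ρ X Y' - ρ X' Y + ⁅Y, Y'⁆) := by
    intro X X' Y Y'
    rw [show ((X, Y) : g × h) = (X, 0) + (0, Y) by simp,
      show ((X', Y') : g × h) = (X', 0) + (0, Y') by simp,
      hbr.add_left, hbr.add_right, hbr.add_right, hsubg, hsubh, hdef,
      hskew (X', 0) (0, Y), hdef]
    apply Prod.ext <;> simp <;> abel
  -- component extraction helper
  -- Jacobi instance 1: (a,0), (b,0), (0,v)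
  have jac1 : ∀ (a b : g) (v : h), True := fun _ _ _ => trivial
  clear jac1
  refine ⟨⟨hρ_addv, hρ_smulv, hρ_adda, hρ_smula, ?_⟩,
    ⟨fun a v w => hσ_addX v w a, fun k a v => hσ_smulX k v a,
      fun a b v => hσ_addY v a b, fun k a v => hσ_smulY k v a, ?_⟩, ?_, ?_⟩
  · -- ρ bracket_act
    intro a b v
    have this1 := hbr.jacobi (a, 0) (b, 0) ((0 : g), v)
    simp only [master, hσz, hσz', hρz, hρz', hρ_negv, hρ_nega, hσ_negY, hσ_negX,
      lie_zero, zero_lie, lie_self, neg_lie, lie_neg, sub_zero, zero_sub, add_zero, zero_add,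
      neg_zero, neg_neg, sub_self] at this1
    have h2 := congrArg Prod.snd this1
    simp only [Prod.snd_add, Prod.snd_zero] at h2
    first
      | (apply eq_of_sub_eq_zero; rw [← h2]; abel_nf; done)
      | (refine (eq_of_sub_eq_zero ?_).symm; rw [← h2]; abel_nf; done)
  · -- σ bracket_act
    intro v w a
    have this1 := hbr.jacobi ((0 : g), v) ((0 : g), w) (a, (0 : h))
    simp only [master, hσz, hσz', hρz, hρz', hρ_negv, hρ_nega, hσ_negY, hσ_negX,
      lie_zero, zero_lie, lie_self, neg_lie, lie_neg, sub_zero, zero_sub, add_zero, zero_add,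
      neg_zero, neg_neg, sub_self] at this1
    have h2 := congrArg Prod.fst this1
    simp only [Prod.fst_add, Prod.fst_zero] at h2
    first
      | (apply eq_of_sub_eq_zero; rw [← h2]; abel_nf; done)
      | (refine (eq_of_sub_eq_zero ?_).symm; rw [← h2]; abel_nf; done)
  · -- matched pair equation for ρ
    intro a v w
    have this1 := hbr.jacobi (a, (0 : h)) ((0 : g), v) ((0 : g), w)
    simp only [master, hσz, hσz', hρz, hρz', hρ_negv, hρ_nega, hσ_negY, hσ_negX,
      lie_zero, zero_lie, lie_self, neg_lie, lie_neg, sub_zero, zero_sub, add_zero, zero_add,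
      neg_zero, neg_neg, sub_self] at this1
    have h2 := congrArg Prod.snd this1
    simp only [Prod.snd_add, Prod.snd_zero] at h2
    rw [show ⁅v, ρ a w⁆ = -⁅ρ a w, v⁆ from (lie_skew _ _).symm]
    first
      | (apply eq_of_sub_eq_zero; rw [← h2]; abel_nf; done)
      | (refine (eq_of_sub_eq_zero ?_).symm; rw [← h2]; abel_nf; done)
  · -- matched pair equation for σ
    intro v a b
    have this1 := hbr.jacobi (a, (0 : h)) (b, (0 : h)) ((0 : g), v)
    simp only [master, hσz, hσz', hρz, hρz', hρ_negv, hρ_nega, hσ_negY, hσ_negX,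
      lie_zero, zero_lie, lie_self, neg_lie, lie_neg, sub_zero, zero_sub, add_zero, zero_add,
      neg_zero, neg_neg, sub_self] at this1
    have h2 := congrArg Prod.fst this1
    simp only [Prod.fst_add, Prod.fst_zero] at h2
    rw [show ⁅a, σ v b⁆ = -⁅σ v b, a⁆ from (lie_skew _ _).symm]
    first
      | (apply eq_of_sub_eq_zero; rw [← h2]; abel_nf; done)
      | (refine (eq_of_sub_eq_zero ?_).symm; rw [← h2]; abel_nf; done)
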